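/- Let μ ≥ 0, let T_μ be the infinite tridiagonal operator on ℓ¹(ℕ) with diagonal 2n, subdiagonal μ, superdiagonal −μ, assumed boundedly invertible, and let ξ_μ = Σ_{i≥1} (−1)^{i+1}(T_μ^{-1})_{i,1} = ‖(T_μ^{-1})_{col(1)}‖₁ > 0. Then the operator L_μ on ℓ¹(ℕ₀) written in block form as L_μ = [[1, θ₀ᵀ],[μ e₀, T_μ]] with θ₀ = (−2,2,−2,2,…)ᵀ and e₀ = (1,0,0,…)ᵀ is boundedly invertible, with Schur complement 1 + 2μξ_μ, and the first column of L_μ^{-1} is (1/(1+2ξ_μμ), −(μ/(1+2ξ_μμ))(T_μ^{-1})_{col(1)})ᵀ. -/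

import Mathlib

noncomputable section Aux15

namespace Aux15

abbrev H := lp (fun _ : ℕ => ℝ) 1

lemma memH_iff (f : ℕ → ℝ) : Memℓp f 1 ↔ Summable (fun i => ‖f i‖) := by
  rw [memℓp_gen_iff (by norm_num)]
  norm_num

lemma summable_of_H (f : H) : Summable (fun i => ‖(f : ℕ → ℝ) i‖) :=
  (memH_iff _).1 (lp.memℓp f)

lemma summable_of_H' (f : H) : Summable (fun i => (f : ℕ → ℝ) i) :=
  (summable_of_H f).of_norm

lemma norm_H (f : H) : ‖f‖ = ∑' i, ‖(f : ℕ → ℝ) i‖ := by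
  rw [lp.norm_eq_tsum_rpow (by norm_num)]
  norm_num

def shiftRfun (f : ℕ → ℝ) : ℕ → ℝ := fun n => match n with
  | 0 => 0
  | k+1 => f k

@[simp] lemma shiftRfun_zero (f : ℕ → ℝ) : shiftRfun f 0 = 0 := rfl
@[simp] lemma shiftRfun_succ (f : ℕ → ℝ) (n : ℕ) : shiftRfun f (n+1) = f n := rfl

lemma shiftRfun_mem (f : H) : Memℓp (shiftRfun f) 1 := by
  rw [memH_iff]
  rw [← summable_nat_add_iff 1]
  exact summable_of_H f

def shiftR : H →L[ℝ] H := LinearMap.mkContinuous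
  { toFun := fun f => ⟨shiftRfun f, shiftRfun_mem f⟩
    map_add' := by
      intro f g; apply lp.ext; funext n
      simp only [lp.coeFn_add, Pi.add_apply]
      cases n <;> simp
    map_smul' := by
      intro a f; apply lp.ext; funext n
      simp only [lp.coeFn_smul, Pi.smul_apply, RingHom.id_apply]
      cases n <;> simp }
  1
  (by
    intro f
    rw [one_mul, norm_H, norm_H]
    have hs : Summable (fun n => ‖shiftRfun (f : ℕ → ℝ) n‖) := (memH_iff _).1 (shiftRfun_mem f)
    have : ∑' i, ‖shiftRfun (f : ℕ → ℝ) i‖ = ∑' i, ‖(f : ℕ → ℝ) i‖ := by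
      rw [Summable.tsum_eq_zero_add hs]; simp
    exact le_of_eq this)

@[simp] lemma shiftR_apply_zero (f : H) : (shiftR f : ℕ → ℝ) 0 = 0 := rfl
@[simp] lemma shiftR_apply_succ (f : H) (n : ℕ) : (shiftR f : ℕ → ℝ) (n+1) = (f : ℕ → ℝ) n := rfl

lemma shiftL_mem (f : H) : Memℓp (fun n => (f : ℕ → ℝ) (n+1)) 1 := by
  rw [memH_iff]
  exact (summable_nat_add_iff 1).2 (summable_of_H f)

def shiftL : H →L[ℝ] H := LinearMap.mkContinuous
  { toFun := fun f => ⟨fun n => (f : ℕ → ℝ) (n+1), shiftL_mem f⟩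
    map_add' := by
      intro f g; apply lp.ext; funext n
      simp only [lp.coeFn_add, Pi.add_apply]
    map_smul' := by
      intro a f; apply lp.ext; funext n
      simp only [lp.coeFn_smul, Pi.smul_apply, RingHom.id_apply] }
  1
  (by
    intro f
    rw [one_mul, norm_H, norm_H]
    calc ∑' i, ‖(f : ℕ → ℝ) (i+1)‖
        ≤ ‖(f : ℕ → ℝ) 0‖ + ∑' i, ‖(f : ℕ → ℝ) (i+1)‖ :=
          le_add_of_nonneg_left (norm_nonneg _)
      _ = ∑' i, ‖(f : ℕ → ℝ) i‖ := (Summable.tsum_eq_zero_add (summable_of_H f)).symm)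

@[simp] lemma shiftL_apply (f : H) (n : ℕ) : (shiftL f : ℕ → ℝ) n = (f : ℕ → ℝ) (n+1) := rfl

lemma summable_coef {c : ℕ → ℝ} {C : ℝ} (hc : ∀ i, |c i| ≤ C) (f : H) :
    Summable (fun i => c i * (f : ℕ → ℝ) i) := by
  apply Summable.of_norm
  apply Summable.of_nonneg_of_le (fun i => norm_nonneg _)
    (fun i => ?_) ((summable_of_H f).mul_left C)
  rw [norm_mul]
  exact mul_le_mul_of_nonneg_right ((Real.norm_eq_abs _) ▸ hc i) (norm_nonneg _)

/-- the bounded functional `x ↦ ∑' i, c i * x i` for bounded coefficients `c`. -/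
def coefF (c : ℕ → ℝ) (C : ℝ) (hc : ∀ i, |c i| ≤ C) : H →L[ℝ] ℝ := LinearMap.mkContinuous
  { toFun := fun f => ∑' i, c i * (f : ℕ → ℝ) i
    map_add' := by
      intro f g
      rw [← Summable.tsum_add (summable_coef hc f) (summable_coef hc g)]
      apply tsum_congr
      intro i
      simp only [lp.coeFn_add, Pi.add_apply]
      ring
    map_smul' := by
      intro a f
      simp only [RingHom.id_apply, smul_eq_mul]
      rw [← tsum_mul_left]
      apply tsum_congr
      intro i
      simp only [lp.coeFn_smul, Pi.smul_apply, smul_eq_mul]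
      ring }
  C
  (by
    intro f
    rw [norm_H]
    calc ‖∑' i, c i * (f : ℕ → ℝ) i‖ ≤ ∑' i, ‖c i * (f : ℕ → ℝ) i‖ :=
          norm_tsum_le_tsum_norm (summable_coef hc f).norm
      _ ≤ ∑' i, C * ‖(f : ℕ → ℝ) i‖ := by
          apply Summable.tsum_le_tsum _ (summable_coef hc f).norm ((summable_of_H f).mul_left C)
          intro i
          rw [norm_mul]
          exact mul_le_mul_of_nonneg_right ((Real.norm_eq_abs _) ▸ hc i) (norm_nonneg _)
      _ = C * ∑' i, ‖(f : ℕ → ℝ) i‖ := tsum_mul_left)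

@[simp] lemma coefF_apply (c : ℕ → ℝ) (C : ℝ) (hc : ∀ i, |c i| ≤ C) (f : H) :
    coefF c C hc f = ∑' i, c i * (f : ℕ → ℝ) i := rfl

def ev0 : H →L[ℝ] ℝ := coefF (fun i => if i = 0 then 1 else 0) 1
  (by intro i; split <;> norm_num)

lemma ev0_apply (f : H) : ev0 f = (f : ℕ → ℝ) 0 := by
  rw [ev0, coefF_apply]
  rw [tsum_eq_single 0 (by intro b hb; simp [hb])]
  simp

def θf : H →L[ℝ] ℝ := coefF (fun j => (-1 : ℝ)^(j+1) * 2) 2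
  (by intro i; rw [abs_mul, abs_pow]; norm_num)

lemma θf_apply (f : H) : θf f = ∑' j, (-1 : ℝ)^(j+1) * 2 * ((f : ℕ → ℝ) j) := rfl

def eb (j : ℕ) : H := lp.single 1 j 1

@[simp] lemma eb_apply (j n : ℕ) : (eb j : ℕ → ℝ) n = if n = j then 1 else 0 := by
  rcases eq_or_ne n j with h | h
  · subst h; simp [eb, lp.single_apply_self]
  · simp [eb, lp.single_apply_ne _ _ _ h, h]

lemma ev0_eb (j : ℕ) : ev0 (eb j) = if j = 0 then 1 else 0 := by
  rw [ev0_apply, eb_apply]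
  rcases eq_or_ne j 0 with h | h <;> simp [h, Ne.symm]

lemma θf_eb (j : ℕ) : θf (eb j) = (-1 : ℝ)^(j+1) * 2 := by
  rw [θf_apply]
  rw [tsum_eq_single j (by intro b hb; simp [hb])]
  simp

lemma shiftL_shiftR (f : H) : shiftL (shiftR f) = f := by
  apply lp.ext; funext n; simp

lemma shiftL_eb_zero : shiftL (eb 0) = 0 := by
  apply lp.ext; funext n
  simp [lp.coeFn_zero]

lemma shiftL_eb_succ (j : ℕ) : shiftL (eb (j+1)) = eb j := by
  apply lp.ext; funext n; simp

lemma shiftR_eb_zero : shiftR (eb 0) = eb 1 := by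
  apply lp.ext; funext n
  cases n <;> simp

lemma ev0_shiftR (f : H) : ev0 (shiftR f) = 0 := by
  rw [ev0_apply]; simp

lemma decomp (f : H) : f = ((f : ℕ → ℝ) 0) • eb 0 + shiftR (shiftL f) := by
  apply lp.ext; funext n
  simp only [lp.coeFn_add, Pi.add_apply, lp.coeFn_smul, Pi.smul_apply, smul_eq_mul]
  cases n <;> simp

section Main

variable (μ ξ : ℝ) (T Tinv : H →L[ℝ] H)

def Mop : H →L[ℝ] H :=
  (ev0 + θf.comp shiftL).smulRight (eb 0) + ((μ • ev0).smulRight (eb 1)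
    + shiftR.comp (T.comp shiftL))

lemma Mop_apply (x : H) : Mop μ T x =
    (ev0 x + θf (shiftL x)) • eb 0 + ((μ * ev0 x) • eb 1 + shiftR (T (shiftL x))) := by
  simp [Mop, ContinuousLinearMap.smulRight_apply, smul_eq_mul]

def gf : H →L[ℝ] ℝ := (1/(1+2*μ*ξ)) • (ev0 - θf.comp (Tinv.comp shiftL))

lemma gf_apply (y : H) : gf μ ξ Tinv y = (1/(1+2*μ*ξ)) * (ev0 y - θf (Tinv (shiftL y))) := by
  simp [gf, smul_eq_mul]

def Minv : H →L[ℝ] H :=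
  (gf μ ξ Tinv).smulRight (eb 0) + (shiftR.comp (Tinv.comp shiftL)
    - (μ • gf μ ξ Tinv).smulRight (shiftR (Tinv (eb 0))))

lemma Minv_apply (y : H) : Minv μ ξ Tinv y =
    (gf μ ξ Tinv y) • eb 0 + (shiftR (Tinv (shiftL y))
      - (μ * gf μ ξ Tinv y) • shiftR (Tinv (eb 0))) := by
  simp [Minv, ContinuousLinearMap.smulRight_apply, smul_eq_mul]

end Main

lemma eq_of_singles {A B : H →L[ℝ] H} (h : ∀ j, A (lp.single 1 j 1) = B (lp.single 1 j 1)) :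
    A = B := by
  refine ContinuousLinearMap.ext fun f => ?_
  have h1 : HasSum (fun j : ℕ => lp.single 1 j ((f : ℕ → ℝ) j)) f :=
    lp.hasSum_single (by norm_num) f
  have hA : HasSum (fun j : ℕ => A (lp.single 1 j ((f : ℕ → ℝ) j))) (A f) := h1.mapL A
  have hB : HasSum (fun j : ℕ => B (lp.single 1 j ((f : ℕ → ℝ) j))) (B f) := h1.mapL B
  have key : (fun j : ℕ => A (lp.single 1 j ((f : ℕ → ℝ) j)))
      = (fun j : ℕ => B (lp.single 1 j ((f : ℕ → ℝ) j))) := by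
    funext j
    have hsingle : lp.single 1 j ((f : ℕ → ℝ) j) = ((f : ℕ → ℝ) j) • (lp.single 1 j (1 : ℝ) : H) := by
      rw [← lp.single_smul]; norm_num
    rw [hsingle, map_smul, map_smul, h j]
  rw [key] at hA
  exact hA.unique hB

end Aux15

open Aux15 in
set_option maxHeartbeats 1000000 in
theorem stmt_15 (μ : ℝ) (hμ : 0 ≤ μ)
    (Tμ Tinv : lp (fun _ : ℕ => ℝ) 1 →L[ℝ] lp (fun _ : ℕ => ℝ) 1)
    (hTent : ∀ i j : ℕ, (Tμ (lp.single 1 j 1)) i =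
      if i = j then 2 * ((j : ℝ) + 1) else if i = j + 1 then μ else if j = i + 1 then -μ else 0)
    (hTi1 : Tinv.comp Tμ = ContinuousLinearMap.id ℝ _)
    (hTi2 : Tμ.comp Tinv = ContinuousLinearMap.id ℝ _)
    (ξ : ℝ)
    (hξ : ξ = ‖Tinv (lp.single 1 0 1)‖)
    (hξpos : 0 < ξ)
    (halt : ∑' i : ℕ, (-1 : ℝ) ^ i * (Tinv (lp.single 1 0 1)) i = ξ)
    (L : lp (fun _ : ℕ => ℝ) 1 →L[ℝ] lp (fun _ : ℕ => ℝ) 1)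
    (hL00 : (L (lp.single 1 0 1)) 0 = 1)
    (hLcol0 : ∀ i : ℕ, (L (lp.single 1 0 1)) (i + 1) = if i = 0 then μ else 0)
    (hLrow0 : ∀ j : ℕ, (L (lp.single 1 (j + 1) 1)) 0 = (-1 : ℝ) ^ (j + 1) * 2)
    (hLblock : ∀ i j : ℕ, (L (lp.single 1 (j + 1) 1)) (i + 1) = (Tμ (lp.single 1 j 1)) i) :
    (1 - μ * ∑' j : ℕ, ((-1 : ℝ) ^ (j + 1) * 2) * (Tinv (lp.single 1 0 1)) j = 1 + 2 * μ * ξ) ∧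
    ∃ Linv : lp (fun _ : ℕ => ℝ) 1 →L[ℝ] lp (fun _ : ℕ => ℝ) 1,
      Linv.comp L = ContinuousLinearMap.id ℝ _ ∧
      L.comp Linv = ContinuousLinearMap.id ℝ _ ∧
      (Linv (lp.single 1 0 1)) 0 = 1 / (1 + 2 * ξ * μ) ∧
      ∀ i : ℕ, (Linv (lp.single 1 0 1)) (i + 1) =
        -(μ / (1 + 2 * ξ * μ)) * (Tinv (lp.single 1 0 1)) i := by
  classical
  have hebe : (lp.single 1 0 (1:ℝ) : H) = eb 0 := rfl
  have hsum : ∑' j : ℕ, ((-1 : ℝ) ^ (j + 1) * 2) * (Tinv (lp.single 1 0 1)) j = -2 * ξ := by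
    rw [← halt, ← tsum_mul_left]
    apply tsum_congr; intro j; ring
  have hθv : θf (Tinv (eb 0)) = -2 * ξ := by
    rw [θf_apply, ← hebe]; exact hsum
  have hspos : (0:ℝ) < 1 + 2*μ*ξ := by nlinarith
  have hs : (1 + 2*μ*ξ) ≠ 0 := ne_of_gt hspos
  have hsring : (1:ℝ) + 2*μ*ξ = 1 + 2*ξ*μ := by ring
  have hTiT : ∀ w : H, Tinv (Tμ w) = w := fun w => by
    have := ContinuousLinearMap.ext_iff.1 hTi1 w
    simpa using this
  have hTTi : ∀ w : H, Tμ (Tinv w) = w := fun w => by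
    have := ContinuousLinearMap.ext_iff.1 hTi2 w
    simpa using this
  have hML : Mop μ Tμ = L := by
    apply eq_of_singles
    intro j
    cases j with
    | zero =>
      have hL0 : L (lp.single 1 0 1) = eb 0 + μ • eb 1 := by
        apply lp.ext; funext n
        simp only [lp.coeFn_add, Pi.add_apply, lp.coeFn_smul, Pi.smul_apply, smul_eq_mul,
          eb_apply]
        match n with
        | 0 => rw [hL00]; norm_num
        | 1 => have h := hLcol0 0; simp at h; rw [h]; norm_num
        | (k+2) => have h := hLcol0 (k+1); simp at h; rw [h]; simp
      rw [hL0, hebe, Mop_apply, shiftL_eb_zero, map_zero, map_zero, map_zero, ev0_eb]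
      simp
    | succ j =>
      have hL1 : L (lp.single 1 (j+1) 1) = ((-1:ℝ)^(j+1) * 2) • eb 0 + shiftR (Tμ (eb j)) := by
        apply lp.ext; funext n
        simp only [lp.coeFn_add, Pi.add_apply, lp.coeFn_smul, Pi.smul_apply, smul_eq_mul,
          eb_apply]
        match n with
        | 0 => rw [hLrow0 j]; simp [eb]
        | (k+1) => rw [hLblock k j]; simp [eb]
      rw [hL1, Mop_apply]
      have h1 : (lp.single 1 (j+1) (1:ℝ) : H) = eb (j+1) := rfl
      rw [h1, shiftL_eb_succ, ev0_eb, θf_eb]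
      simp
  have hgap : ∀ x : H, gf μ ξ Tinv (Mop μ Tμ x) = ev0 x := by
    intro x
    have hA1 : shiftL (Mop μ Tμ x) = (μ * ev0 x) • eb 0 + Tμ (shiftL x) := by
      rw [Mop_apply, map_add, map_add, map_smul, map_smul, shiftL_eb_zero,
        show shiftL (eb 1) = eb 0 from shiftL_eb_succ 0, shiftL_shiftR]
      simp
    have hA2 : ev0 (Mop μ Tμ x) = ev0 x + θf (shiftL x) := by
      rw [Mop_apply, map_add, map_add, map_smul, map_smul, ev0_eb, ev0_eb, ev0_shiftR]
      simp
    have hTA : Tinv (shiftL (Mop μ Tμ x)) = (μ * ev0 x) • Tinv (eb 0) + shiftL x := by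
      rw [hA1, map_add, map_smul, hTiT]
    have hθA : θf (Tinv (shiftL (Mop μ Tμ x))) = (μ * ev0 x) * (-2*ξ) + θf (shiftL x) := by
      rw [hTA, map_add, map_smul, hθv, smul_eq_mul]
    rw [gf_apply, hA2, hθA]
    field_simp
    ring
  have key1 : ∀ x : H, Minv μ ξ Tinv (Mop μ Tμ x) = x := by
    intro x
    have hA1 : shiftL (Mop μ Tμ x) = (μ * ev0 x) • eb 0 + Tμ (shiftL x) := by
      rw [Mop_apply, map_add, map_add, map_smul, map_smul, shiftL_eb_zero,
        show shiftL (eb 1) = eb 0 from shiftL_eb_succ 0, shiftL_shiftR]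
      simp
    have hTA : Tinv (shiftL (Mop μ Tμ x)) = (μ * ev0 x) • Tinv (eb 0) + shiftL x := by
      rw [hA1, map_add, map_smul, hTiT]
    rw [Minv_apply, hgap, hTA, map_add, map_smul]
    simp only [add_sub_cancel_left]
    rw [ev0_apply]
    exact (decomp x).symm
  have key2 : ∀ y : H, Mop μ Tμ (Minv μ ξ Tinv y) = y := by
    intro y
    have hB1 : ev0 (Minv μ ξ Tinv y) = gf μ ξ Tinv y := by
      rw [Minv_apply, map_add, map_sub, map_smul, map_smul, ev0_eb, ev0_shiftR, ev0_shiftR]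
      simp
    have hB2 : shiftL (Minv μ ξ Tinv y) = Tinv (shiftL y) - (μ * gf μ ξ Tinv y) • Tinv (eb 0) := by
      rw [Minv_apply, map_add, map_sub, map_smul, map_smul, shiftL_eb_zero, shiftL_shiftR,
        shiftL_shiftR]
      simp
    have hθB : θf (shiftL (Minv μ ξ Tinv y)) =
        θf (Tinv (shiftL y)) - (μ * gf μ ξ Tinv y) * (-2*ξ) := by
      rw [hB2, map_sub, map_smul, hθv, smul_eq_mul]
    have hTB : Tμ (shiftL (Minv μ ξ Tinv y)) = shiftL y - (μ * gf μ ξ Tinv y) • eb 0 := by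
      rw [hB2, map_sub, map_smul, hTTi, hTTi]
    have hcoef : gf μ ξ Tinv y + (θf (Tinv (shiftL y)) - (μ * gf μ ξ Tinv y) * (-2*ξ)) = ev0 y := by
      rw [gf_apply]
      field_simp
      ring
    have hcancel : ∀ (c w : H), c + (w - c) = w := fun c w => by abel
    rw [Mop_apply, hB1, hθB, hTB, hcoef, map_sub, map_smul, shiftR_eb_zero, hcancel,
      ev0_apply]
    exact (decomp y).symm
  refine ⟨by rw [hsum]; ring, Minv μ ξ Tinv, ?_, ?_, ?_, ?_⟩
  · rw [← hML]
    refine ContinuousLinearMap.ext fun x => ?_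
    simpa using key1 x
  · rw [← hML]
    refine ContinuousLinearMap.ext fun y => ?_
    simpa using key2 y
  · have hg0 : gf μ ξ Tinv (eb 0) = 1/(1+2*μ*ξ) := by
      rw [gf_apply, shiftL_eb_zero, map_zero, map_zero, ev0_eb]
      simp
    rw [hebe, Minv_apply, hg0, shiftL_eb_zero, map_zero, map_zero]
    simp only [lp.coeFn_add, Pi.add_apply, lp.coeFn_smul, Pi.smul_apply, smul_eq_mul,
      lp.coeFn_sub, Pi.sub_apply, eb_apply, lp.coeFn_zero, Pi.zero_apply, shiftR_apply_zero]
    rw [hsring]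
    norm_num
  · intro i
    have hg0 : gf μ ξ Tinv (eb 0) = 1/(1+2*μ*ξ) := by
      rw [gf_apply, shiftL_eb_zero, map_zero, map_zero, ev0_eb]
      simp
    rw [hebe, Minv_apply, hg0, shiftL_eb_zero, map_zero, map_zero]
    simp only [lp.coeFn_add, Pi.add_apply, lp.coeFn_smul, Pi.smul_apply, smul_eq_mul,
      lp.coeFn_sub, Pi.sub_apply, eb_apply, lp.coeFn_zero, Pi.zero_apply, shiftR_apply_succ]
    rw [← hebe, hsring, if_neg (Nat.succ_ne_zero i)]
    ring
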